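/- arXiv:math/0006123 — 4 statements merged into one kernel-verified Lean document; each statement's English description precedes it below -/
import Mathlib

section
/- Let k be a commutative ℚ-algebra, let A = ⊕_{n∈ℤ} A_n be a ℤ-graded commutative k-algebra, and let Δ : A → A be a k-linear map of degree -1 with Δ² = 0 such that the bracket [·•·]_Δ satisfies the odd Leibniz rule [a•(b ∧ c)]_Δ = [a•b]_Δ ∧ c + (-1)^{(|a|-1)|b|} b ∧ [a•c]_Δ for all homogeneous a, b, c. Then [·•·]_Δ satisfies the graded Jacobi identity: for all homogeneous a, b, c ∈ A, [a•[b•c]_Δ]_Δ = [[a•b]_Δ•c]_Δ + (-1)^{(|a|-1)(|b|-1)} [b•[a•c]_Δ]_Δ. (In other words, a Gerstenhaber–Batalin–Vilkovisky algebra is a Gerstenhaber algebra.) -/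
/-- The Gerstenhaber–Batalin–Vilkovisky bracket associated to an operator `Δ`
on a graded algebra, defined on a homogeneous element `a` of degree `m` by
`[a • b]_Δ = (-1)^m (Δ(a ∧ b) - (Δ a) ∧ b - (-1)^m a ∧ Δ b)`. -/
def gbvBracket {k A : Type*} [CommRing k] [Ring A] [Algebra k A]
    (Δ : A →ₗ[k] A) (m : ℤ) (a b : A) : A :=
  (Int.negOnePow m : ℤ) • (Δ (a * b) - Δ a * b - (Int.negOnePow m : ℤ) • (a * Δ b))


section
variable {k A : Type*} [CommRing k] [Ring A] [Algebra k A] (Δ : A →ₗ[k] A)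

lemma gbv_sign_disj (q : ℤ) : ((Int.negOnePow q : ℤ) = 1 ∨ (Int.negOnePow q : ℤ) = -1) :=
  Int.isUnit_iff.mp (q.negOnePow).isUnit

lemma gbv_sign_sub_one (q : ℤ) : (Int.negOnePow (q-1) : ℤ) = -(Int.negOnePow q : ℤ) := by
  rw [Int.negOnePow_sub]; simp

lemma gbv_sub_right (q : ℤ) (x y z : A) :
    gbvBracket Δ q x (y - z) = gbvBracket Δ q x y - gbvBracket Δ q x z := by
  simp only [gbvBracket, mul_sub, map_sub, smul_sub]
  abel

lemma gbv_zsmul_right (q : ℤ) (r : ℤ) (x y : A) :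
    gbvBracket Δ q x (r • y) = r • gbvBracket Δ q x y := by
  simp only [gbvBracket, mul_smul_comm, map_zsmul, smul_sub, smul_comm r]

lemma gbv_expand (q : ℤ) (x y : A) :
    gbvBracket Δ q x y = (Int.negOnePow q : ℤ) • Δ (x*y)
      - (Int.negOnePow q : ℤ) • (Δ x * y) - x * Δ y := by
  rcases gbv_sign_disj q with h | h <;> simp only [gbvBracket, h] <;> module

lemma gbv_D_mul (q : ℤ) (x y : A) :
    Δ (x * y) = (Int.negOnePow q : ℤ) • gbvBracket Δ q x y + Δ x * y
      + (Int.negOnePow q : ℤ) • (x * Δ y) := by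
  rcases gbv_sign_disj q with h | h <;> simp only [gbvBracket, h] <;> module

lemma gbv_F2 (hΔ2 : ∀ a : A, Δ (Δ a) = 0) (q : ℤ) (x y : A) :
    Δ (gbvBracket Δ q x y) = gbvBracket Δ (q-1) (Δ x) y
      - (Int.negOnePow q : ℤ) • gbvBracket Δ q x (Δ y) := by
  rcases gbv_sign_disj q with h | h <;>
    simp only [gbvBracket, gbv_sign_sub_one, h, map_sub, map_smul, map_zsmul, hΔ2,
      zero_mul, mul_zero, sub_zero, smul_zero, zero_sub, zero_smul, mul_zero] <;>
    module

lemma gbv_F2' (hΔ2 : ∀ a : A, Δ (Δ a) = 0) (q : ℤ) (x y : A) :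
    gbvBracket Δ q x (Δ y) = (Int.negOnePow q : ℤ) • gbvBracket Δ (q-1) (Δ x) y
      - (Int.negOnePow q : ℤ) • Δ (gbvBracket Δ q x y) := by
  rw [gbv_F2 Δ hΔ2 q x y]
  rcases gbv_sign_disj q with h | h <;> rw [h] <;> module

end

/-- a GBV algebra is a Gerstenhaber algebra.  Let `k` be a
commutative ℚ-algebra, `A` a ℤ-graded commutative `k`-algebra, and `Δ` a
`k`-linear map of degree `-1` with `Δ² = 0` whose bracket satisfies the odd
Leibniz rule.  Then `[·•·]_Δ` satisfies the graded Jacobi identity: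
`[a•[b•c]] = [[a•b]•c] + (-1)^{(|a|-1)(|b|-1)} [b•[a•c]]` for homogeneous
`a, b, c`. -/
theorem gbvBracket_jacobi {k A : Type*} [CommRing k] [Algebra ℚ k]
    [Ring A] [Algebra k A]
    (𝒜 : ℤ → Submodule k A) [GradedAlgebra 𝒜]
    (hcomm : ∀ (m n : ℤ) (a b : A), a ∈ 𝒜 m → b ∈ 𝒜 n →
      a * b = (Int.negOnePow (m * n) : ℤ) • (b * a))
    (Δ : A →ₗ[k] A)
    (hΔdeg : ∀ (n : ℤ) (a : A), a ∈ 𝒜 n → Δ a ∈ 𝒜 (n - 1))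
    (hΔ2 : ∀ a : A, Δ (Δ a) = 0)
    (hLeib : ∀ (m n p : ℤ) (a b c : A), a ∈ 𝒜 m → b ∈ 𝒜 n → c ∈ 𝒜 p →
      gbvBracket Δ m a (b * c)
        = gbvBracket Δ m a b * c
          + (Int.negOnePow ((m - 1) * n) : ℤ) • (b * gbvBracket Δ m a c))
    (m n p : ℤ) (a b c : A) (ha : a ∈ 𝒜 m) (hb : b ∈ 𝒜 n) (hc : c ∈ 𝒜 p) :
    gbvBracket Δ m a (gbvBracket Δ n b c)
      = gbvBracket Δ (m + n - 1) (gbvBracket Δ m a b) c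
        + (Int.negOnePow ((m - 1) * (n - 1)) : ℤ) •
            gbvBracket Δ n b (gbvBracket Δ m a c) := by
  have s3 : (Int.negOnePow (m+n-1) : ℤ)
      = -((Int.negOnePow m : ℤ) * (Int.negOnePow n : ℤ)) := by
    rw [gbv_sign_sub_one, Int.negOnePow_add]; push_cast; ring
  have s4 : (Int.negOnePow ((m-1)*n) : ℤ)
      = (Int.negOnePow (m*n) : ℤ) * (Int.negOnePow n : ℤ) := by
    have h : (m-1)*n = m*n - n := by ring
    rw [h, Int.negOnePow_sub]; push_cast; ring
  have s5 : (Int.negOnePow ((m-1-1)*n) : ℤ) = (Int.negOnePow (m*n) : ℤ) := by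
    have h : (m-1-1)*n = m*n - 2*n := by ring
    rw [h, Int.negOnePow_sub, Int.negOnePow_two_mul]; push_cast; ring
  have s6 : (Int.negOnePow ((m-1)*(n-1)) : ℤ)
      = -((Int.negOnePow (m*n) : ℤ) * ((Int.negOnePow m : ℤ) * (Int.negOnePow n : ℤ))) := by
    have h : (m-1)*(n-1) = m*n - (m+n-1) := by ring
    rw [h, Int.negOnePow_sub, Int.negOnePow_sub, Int.negOnePow_add]
    push_cast
    simp [Int.negOnePow_one]
  have H1 := hLeib m n p a b c ha hb hc
  have H2 := hLeib (m-1) n p (Δ a) b c (hΔdeg m a ha) hb hc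
  have H3 := hLeib m (n-1) p a (Δ b) c ha (hΔdeg n b hb) hc
  have H4 := hLeib m n (p-1) a b (Δ c) ha hb (hΔdeg p c hc)
  rw [gbv_expand Δ n b c, gbv_sub_right, gbv_sub_right, gbv_zsmul_right, gbv_zsmul_right,
    gbv_F2' Δ hΔ2 m a (b*c), H2, H1, map_add, map_zsmul,
    gbv_D_mul Δ (m+n-1) (gbvBracket Δ m a b) c, gbv_D_mul Δ n b (gbvBracket Δ m a c),
    gbv_F2 Δ hΔ2 m a b, gbv_F2 Δ hΔ2 m a c, H3, H4]
  simp only [s3, s4, s5, s6]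
  simp only [sub_mul, smul_mul_assoc, mul_sub, mul_smul_comm]
  rcases gbv_sign_disj m with h1 | h1 <;> rcases gbv_sign_disj n with h2 | h2 <;>
    rcases gbv_sign_disj (m*n) with h3 | h3 <;>
    simp only [h1, h2, h3] <;> module
end

section
/- Let k be a commutative ring, let A = ⊕_{n∈ℤ} A_n be a ℤ-graded commutative k-algebra, and let Δ : A → A be a k-linear map of degree -1 with Δ² = 0. Then Δ is a graded derivation of the bracket [·•·]_Δ: for all homogeneous a, b ∈ A, Δ[a•b]_Δ = [Δa•b]_Δ - (-1)^{|a|} [a•Δb]_Δ. -/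
/-- if `A` is a ℤ-graded commutative `k`-algebra and `Δ` is a
`k`-linear map of degree `-1` with `Δ² = 0`, then `Δ` is a graded derivation of
the bracket `[·•·]_Δ`: for homogeneous `a, b`,
`Δ[a•b]_Δ = [Δa•b]_Δ - (-1)^{|a|} [a•Δb]_Δ`. -/
theorem delta_derivation_of_gbvBracket {k A : Type*} [CommRing k]
    [Ring A] [Algebra k A]
    (𝒜 : ℤ → Submodule k A) [GradedAlgebra 𝒜]
    (hcomm : ∀ (m n : ℤ) (a b : A), a ∈ 𝒜 m → b ∈ 𝒜 n →
      a * b = (Int.negOnePow (m * n) : ℤ) • (b * a))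
    (Δ : A →ₗ[k] A)
    (hΔdeg : ∀ (n : ℤ) (a : A), a ∈ 𝒜 n → Δ a ∈ 𝒜 (n - 1))
    (hΔ2 : ∀ a : A, Δ (Δ a) = 0)
    (m n : ℤ) (a b : A) (ha : a ∈ 𝒜 m) (hb : b ∈ 𝒜 n) :
    Δ (gbvBracket Δ m a b)
      = gbvBracket Δ (m - 1) (Δ a) b
        - (Int.negOnePow m : ℤ) • gbvBracket Δ m a (Δ b) := by
  have hsm : (Int.negOnePow m : ℤ) * (Int.negOnePow m : ℤ) = 1 := by
    rw [← Units.val_mul, Int.units_mul_self]; rfl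
  have hm1 : (Int.negOnePow (m - 1) : ℤ) = -(Int.negOnePow m : ℤ) := by
    rw [Int.negOnePow_sub, Int.negOnePow_one]; push_cast; ring
  simp only [gbvBracket, map_sub, map_smul, map_zsmul, hΔ2, hm1, smul_sub, smul_smul, hsm,
    zero_mul, mul_zero, zero_sub, smul_zero, one_smul, neg_smul, neg_mul, sub_zero]
  simp only [smul_neg, smul_smul, hsm, one_smul]
  abel
end

section
/- Let k be a commutative ring, let A = ⊕_{n∈ℤ} A_n be a ℤ-graded commutative k-algebra, let Δ : A → A be a k-linear map of degree -1, and let δ : A → A be a k-linear map of degree +1 which is a graded derivation of ∧ (δ(a ∧ b) = (δa) ∧ b + (-1)^{|a|} a ∧ δb) and satisfies δΔ + Δδ = 0. Then δ is a graded derivation of the bracket [·•·]_Δ: for all homogeneous a, b ∈ A, δ[a•b]_Δ = [δa•b]_Δ - (-1)^{|a|} [a•δb]_Δ. -/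
/-- let `A` be a ℤ-graded commutative `k`-algebra, `Δ` a `k`-linear
map of degree `-1`, and `δ` a `k`-linear map of degree `+1` which is a graded
derivation of the product and satisfies `δΔ + Δδ = 0`.  Then `δ` is a graded
derivation of the bracket `[·•·]_Δ`: for homogeneous `a, b`,
`δ[a•b]_Δ = [δa•b]_Δ - (-1)^{|a|} [a•δb]_Δ`. -/
theorem differential_derivation_of_gbvBracket {k A : Type*} [CommRing k]
    [Ring A] [Algebra k A]
    (𝒜 : ℤ → Submodule k A) [GradedAlgebra 𝒜]
    (hcomm : ∀ (m n : ℤ) (a b : A), a ∈ 𝒜 m → b ∈ 𝒜 n →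
      a * b = (Int.negOnePow (m * n) : ℤ) • (b * a))
    (Δ : A →ₗ[k] A)
    (hΔdeg : ∀ (n : ℤ) (a : A), a ∈ 𝒜 n → Δ a ∈ 𝒜 (n - 1))
    (δ : A →ₗ[k] A)
    (hδdeg : ∀ (n : ℤ) (a : A), a ∈ 𝒜 n → δ a ∈ 𝒜 (n + 1))
    (hδLeib : ∀ (m : ℤ) (a b : A), a ∈ 𝒜 m →
      δ (a * b) = δ a * b + (Int.negOnePow m : ℤ) • (a * δ b))
    (hanticomm : ∀ a : A, δ (Δ a) + Δ (δ a) = 0)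
    (m n : ℤ) (a b : A) (ha : a ∈ 𝒜 m) (hb : b ∈ 𝒜 n) :
    δ (gbvBracket Δ m a b)
      = gbvBracket Δ (m + 1) (δ a) b
        - (Int.negOnePow m : ℤ) • gbvBracket Δ m a (δ b) := by
  have h0 : ∀ x : A, δ (Δ x) = -Δ (δ x) := fun x =>
    eq_neg_of_add_eq_zero_left (hanticomm x)
  set ε : ℤ := (Int.negOnePow m : ℤ) with hεdef
  have hε : ε * ε = 1 := by
    rw [hεdef, ← Units.val_mul, Int.units_mul_self, Units.val_one]
  have hm1 : ((m - 1).negOnePow : ℤ) = -ε := by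
    have h := Int.negOnePow_succ (m - 1)
    rw [sub_add_cancel] at h
    rw [hεdef, h]; push_cast; ring
  have hms : ((m + 1).negOnePow : ℤ) = -ε := by
    rw [hεdef, Int.negOnePow_succ]; push_cast; ring
  have h1 : δ (Δ (a * b)) = -(Δ (δ a * b) + ε • Δ (a * δ b)) := by
    rw [h0, hδLeib m a b ha, map_add, map_zsmul, ← hεdef]
  have h2 : δ (Δ a * b) = -Δ (δ a) * b + (-ε) • (Δ a * δ b) := by
    rw [hδLeib (m - 1) (Δ a) b (hΔdeg m a ha), h0, hm1, neg_mul]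
  have h3 : δ (a * Δ b) = δ a * Δ b + ε • (a * -Δ (δ b)) := by
    rw [hδLeib m a (Δ b) ha, h0, ← hεdef]
  simp only [gbvBracket, map_sub, map_zsmul, map_mul, ← hεdef, hms, h1, h2, h3]
  simp only [smul_add, smul_sub, smul_neg, smul_smul, hε, one_smul, neg_mul,
    mul_neg, neg_neg, neg_smul, mul_neg_one, neg_one_mul]
  abel
end

section
/- Let k be a commutative ℚ-algebra, let (L, [·,·], δ) be a differential graded Lie algebra over k, and let ω₁, ω₂, …, ω_n ∈ L₁ be elements of degree 1 satisfying δω₁ = 0 and δω_k = -(1/2) Σ_{p+q=k, p,q≥1} [ω_p, ω_q] for all 2 ≤ k ≤ n. Then δ( Σ_{p+q=n+1, p,q≥1} [ω_p, ω_q] ) = 0. (This is the inductive step allowing the order-(n+1) term of a formal power series solution of the Maurer–Cartan equation to be constructed from the lower-order terms.) -/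
/-- let `(L, [·,·], δ)` be a differential graded Lie algebra over a
commutative ℚ-algebra `k`, and let `ω₁, …, ω_n` be degree-1 elements with
`δω₁ = 0` and `δω_k = -(1/2) Σ_{p+q=k, p,q ≥ 1} [ω_p, ω_q]` for `2 ≤ k ≤ n`.
Then `δ(Σ_{p+q=n+1, p,q ≥ 1} [ω_p, ω_q]) = 0`: this is the inductive step in the
construction of a formal power series solution of the Maurer–Cartan equation. -/
theorem maurer_cartan_inductive_step {k L : Type*} [CommRing k] [Algebra ℚ k]
    [AddCommGroup L] [Module k L] [Module ℚ L] [IsScalarTower ℚ k L]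
    (𝒜 : ℤ → Submodule k L) [DirectSum.Decomposition 𝒜]
    (br : L →ₗ[k] L →ₗ[k] L)
    (hdeg : ∀ (m n : ℤ) (x y : L), x ∈ 𝒜 m → y ∈ 𝒜 n → br x y ∈ 𝒜 (m + n))
    (hanti : ∀ (m n : ℤ) (x y : L), x ∈ 𝒜 m → y ∈ 𝒜 n →
      br x y = -((Int.negOnePow (m * n) : ℤ) • br y x))
    (hjac : ∀ (m n p : ℤ) (x y z : L), x ∈ 𝒜 m → y ∈ 𝒜 n → z ∈ 𝒜 p →
      br x (br y z) = br (br x y) z + (Int.negOnePow (m * n) : ℤ) • br y (br x z))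
    (δ : L →ₗ[k] L)
    (hδdeg : ∀ (m : ℤ) (x : L), x ∈ 𝒜 m → δ x ∈ 𝒜 (m + 1))
    (hδ2 : ∀ x : L, δ (δ x) = 0)
    (hδder : ∀ (m n : ℤ) (x y : L), x ∈ 𝒜 m → y ∈ 𝒜 n →
      δ (br x y) = br (δ x) y + (Int.negOnePow m : ℤ) • br x (δ y))
    (n : ℕ) (hn : 1 ≤ n) (ω : ℕ → L)
    (hωdeg : ∀ i, ω i ∈ 𝒜 1)
    (hω1 : δ (ω 1) = 0)
    (hωk : ∀ j, 2 ≤ j → j ≤ n →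
      δ (ω j) = -((1/2 : ℚ) • ∑ p ∈ Finset.Ico 1 j, br (ω p) (ω (j - p)))) :
    δ (∑ p ∈ Finset.Ico 1 (n + 1), br (ω p) (ω (n + 1 - p))) = 0 := by
  classical
  -- basic degree facts
  have hδω : ∀ i, δ (ω i) ∈ 𝒜 2 := fun i => by
    have := hδdeg 1 _ (hωdeg i); norm_num at this; exact this
  have hbr2 : ∀ i j, br (ω i) (ω j) ∈ 𝒜 2 := fun i j => by
    have := hdeg 1 1 _ _ (hωdeg i) (hωdeg j); norm_num at this; exact this
  -- antisymmetry specializations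
  have hanti21 : ∀ (x : L), x ∈ 𝒜 2 → ∀ j, br x (ω j) = - br (ω j) x := fun x hx j => by
    have h := hanti 2 1 x (ω j) hx (hωdeg j)
    have h2 : ((Int.negOnePow (2 * 1) : ℤˣ) : ℤ) = 1 := by decide
    rw [h2] at h; simpa using h
  -- the triple bracket
  set T : ℕ → ℕ → ℕ → L := fun i j l => br (ω i) (br (ω j) (ω l)) with hT
  have hjac3 : ∀ i j l, T i j l = - T l i j - T j i l := by
    intro i j l
    have h := hjac 1 1 1 _ _ _ (hωdeg i) (hωdeg j) (hωdeg l)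
    have h1 : ((Int.negOnePow (1 * 1) : ℤˣ) : ℤ) = -1 := by decide
    rw [h1] at h
    have h2 := hanti21 _ (hbr2 i j) l
    simp only [hT]
    rw [h, h2]
    simp [sub_eq_add_neg]
  -- the index triangle
  set Δ : Finset (ℕ × ℕ) :=
    (Finset.Ico 1 (n + 1) ×ˢ Finset.Ico 1 (n + 1)).filter (fun x => x.1 + x.2 ≤ n) with hΔ
  have hmemΔ : ∀ x : ℕ × ℕ, x ∈ Δ ↔ 1 ≤ x.1 ∧ 1 ≤ x.2 ∧ x.1 + x.2 ≤ n := by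
    intro x
    simp only [hΔ, Finset.mem_filter, Finset.mem_product, Finset.mem_Ico]
    omega
  -- triangular double sums as sums over Δ
  have tri : ∀ g : ℕ → ℕ → L,
      (∑ p ∈ Finset.Ico 1 (n + 1), ∑ a ∈ Finset.Ico 1 (n + 1 - p), g p a)
        = ∑ x ∈ Δ, g x.1 x.2 := by
    intro g
    rw [hΔ, Finset.sum_filter, Finset.sum_product]
    refine Finset.sum_congr rfl fun p hp => ?_
    rw [← Finset.sum_filter]
    refine Finset.sum_congr ?_ fun a _ => rfl
    ext a
    simp only [Finset.mem_filter, Finset.mem_Ico]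
    have hp' : 1 ≤ p ∧ p < n + 1 := by simpa [Finset.mem_Ico] using hp
    omega
  set S3 : L := ∑ x ∈ Δ, T x.1 x.2 (n + 1 - x.1 - x.2) with hS3
  -- the two reindexed triple sums agree with S3
  have bij1 : ∑ x ∈ Δ, T (n + 1 - x.1 - x.2) x.1 x.2 = S3 := by
    rw [hS3]
    refine Finset.sum_nbij' (fun x => (n + 1 - x.1 - x.2, x.1))
      (fun y => (y.2, n + 1 - y.1 - y.2)) ?_ ?_ ?_ ?_ ?_
    · intro a ha; rw [hmemΔ] at *; simp at *; omega
    · intro a ha; rw [hmemΔ] at *; simp at *; omega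
    · intro a ha; rw [hmemΔ] at ha; ext <;> simp <;> omega
    · intro a ha; rw [hmemΔ] at ha; ext <;> simp <;> omega
    · intro a ha
      rw [hmemΔ] at ha
      have e1 : n + 1 - (n + 1 - a.1 - a.2) - a.1 = a.2 := by omega
      simp only [e1]
  have bij2 : ∑ x ∈ Δ, T x.2 x.1 (n + 1 - x.1 - x.2) = S3 := by
    rw [hS3]
    refine Finset.sum_nbij' (fun x => (x.2, x.1)) (fun y => (y.2, y.1)) ?_ ?_ ?_ ?_ ?_
    · intro a ha; rw [hmemΔ] at *; simp at *; omega
    · intro a ha; rw [hmemΔ] at *; simp at *; omega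
    · intro a _; rfl
    · intro a _; rfl
    · intro a ha
      rw [hmemΔ] at ha
      have e1 : n + 1 - a.2 - a.1 = n + 1 - a.1 - a.2 := by omega
      simp only [e1]
  -- S3 = 0
  have hS30 : S3 = 0 := by
    have e : S3 = - S3 - S3 := by
      calc S3 = ∑ x ∈ Δ, (- T (n + 1 - x.1 - x.2) x.1 x.2 - T x.2 x.1 (n + 1 - x.1 - x.2)) := by
            rw [hS3]; exact Finset.sum_congr rfl fun x _ => hjac3 _ _ _
        _ = - (∑ x ∈ Δ, T (n + 1 - x.1 - x.2) x.1 x.2)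
              - ∑ x ∈ Δ, T x.2 x.1 (n + 1 - x.1 - x.2) := by
            rw [Finset.sum_sub_distrib, Finset.sum_neg_distrib]
        _ = - S3 - S3 := by rw [bij1, bij2]
    have h3 : S3 + S3 + S3 = 0 := by nth_rewrite 1 [e]; abel
    have h3' : (3 : ℚ) • S3 = 0 := by
      have : ((1 : ℚ) + 1 + 1) • S3 = S3 + S3 + S3 := by
        rw [add_smul, add_smul, one_smul]
      rw [show (3 : ℚ) = 1 + 1 + 1 by norm_num, this, h3]
    calc S3 = (1/3 : ℚ) • ((3 : ℚ) • S3) := by rw [smul_smul]; norm_num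
      _ = 0 := by rw [h3']; simp
  -- compute δ of the sum
  have step1 : δ (∑ p ∈ Finset.Ico 1 (n + 1), br (ω p) (ω (n + 1 - p)))
      = (∑ p ∈ Finset.Ico 1 (n + 1), br (δ (ω p)) (ω (n + 1 - p)))
        - ∑ p ∈ Finset.Ico 1 (n + 1), br (ω p) (δ (ω (n + 1 - p))) := by
    rw [map_sum, ← Finset.sum_sub_distrib]
    refine Finset.sum_congr rfl fun p hp => ?_
    have h := hδder 1 1 _ _ (hωdeg p) (hωdeg (n + 1 - p))
    simpa [sub_eq_add_neg] using h
  set B : L := ∑ p ∈ Finset.Ico 1 (n + 1), br (ω p) (δ (ω (n + 1 - p))) with hBdef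
  have hA : ∑ p ∈ Finset.Ico 1 (n + 1), br (δ (ω p)) (ω (n + 1 - p)) = - B := by
    rw [hBdef]
    rw [show (∑ p ∈ Finset.Ico 1 (n + 1), br (δ (ω p)) (ω (n + 1 - p)))
        = ∑ p ∈ Finset.Ico 1 (n + 1), - br (ω (n + 1 - p)) (δ (ω p)) from
      Finset.sum_congr rfl fun p _ => hanti21 _ (hδω p) _]
    rw [Finset.sum_neg_distrib]
    congr 1
    refine Finset.sum_nbij' (fun p => n + 1 - p) (fun p => n + 1 - p) ?_ ?_ ?_ ?_ ?_
    · intro a ha; simp only [Finset.mem_Ico] at *; omega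
    · intro a ha; simp only [Finset.mem_Ico] at *; omega
    · intro a ha; simp only [Finset.mem_Ico] at ha
      show n + 1 - (n + 1 - a) = a; omega
    · intro a ha; simp only [Finset.mem_Ico] at ha
      show n + 1 - (n + 1 - a) = a; omega
    · intro a ha
      simp only [Finset.mem_Ico] at ha
      have e1 : n + 1 - (n + 1 - a) = a := by omega
      rw [e1]
  have hB : B = -((1/2 : ℚ) • S3) := by
    rw [hBdef, hS3, ← tri (fun p a => T p a (n + 1 - p - a))]
    rw [Finset.smul_sum, ← Finset.sum_neg_distrib]
    refine Finset.sum_congr rfl fun p hp => ?_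
    simp only [Finset.mem_Ico] at hp
    by_cases hpn : p = n
    · have e1 : n + 1 - p = 1 := by omega
      rw [e1, hω1]
      simp
    · have h2 : 2 ≤ n + 1 - p := by omega
      have h3 : n + 1 - p ≤ n := by omega
      rw [hωk _ h2 h3, map_neg, LinearMap.map_smul_of_tower, map_sum]
  -- conclude
  rw [step1, hA, hB]
  rw [hS30]
  simp
end
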